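/- Conjugacy of integrals: a bounded function f : F → ℝ is F^α-integrable on C(a,b) = w([a,b]) if and only if g = φ[f] is Riemann integrable over [S_F^α(a), S_F^α(b)], and in that case ∫_{C(a,b)} f(θ) d_F^α θ = ∫_{S_F^α(a)}^{S_F^α(b)} g(u) du. -/

import Mathlib

open Set
open scoped ENNReal

structure Subdivision (a b : ℝ) where
  k : ℕ
  t : ℕ → ℝ
  first : t 0 = a
  last : t k = b
  mono : ∀ i < k, t i < t (i + 1)

def Subdivision.MeshLE {a b : ℝ} (P : Subdivision a b) (δ : ℝ) : Prop :=
  ∀ i < P.k, P.t (i + 1) - P.t i ≤ δ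

namespace Subdivision

variable {a b : ℝ}

theorem t_lt_t (P : Subdivision a b) : ∀ {i j : ℕ}, i < j → j ≤ P.k → P.t i < P.t j := by
  intro i j hij hj
  induction j with
  | zero => omega
  | succ m ih =>
    rcases Nat.lt_succ_iff_lt_or_eq.mp hij with h | h
    · exact (ih h (by omega)).trans (P.mono m (by omega))
    · subst h; exact P.mono i (by omega)

theorem t_le_t (P : Subdivision a b) {i j : ℕ} (hij : i ≤ j) (hj : j ≤ P.k) :
    P.t i ≤ P.t j := by
  rcases eq_or_lt_of_le hij with rfl | h
  · exact le_rfl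
  · exact (P.t_lt_t h hj).le

theorem mem_Icc (P : Subdivision a b) {i : ℕ} (hi : i ≤ P.k) : P.t i ∈ Icc a b := by
  constructor
  · have h := P.t_le_t (Nat.zero_le i) hi
    rwa [P.first] at h
  · have h := P.t_le_t hi le_rfl
    rwa [P.last] at h

theorem a_le_b (P : Subdivision a b) : a ≤ b :=
  (P.mem_Icc le_rfl).1.trans (P.mem_Icc le_rfl).2

/-- trivial subdivision of a degenerate interval -/
def refl (x : ℝ) : Subdivision x x :=
  ⟨0, fun _ => x, rfl, rfl, fun i hi => absurd hi (Nat.not_lt_zero i)⟩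

/-- single-cell subdivision -/
def single {x u : ℝ} (h : x < u) : Subdivision x u :=
  ⟨1, fun i => if i = 0 then x else u, by simp, by simp, by
    intro i hi
    have : i = 0 := by omega
    subst this
    simpa using h⟩

/-- concatenation of subdivisions -/
def concat {x s u : ℝ} (P : Subdivision x s) (Q : Subdivision s u) : Subdivision x u where
  k := P.k + Q.k
  t := fun i => if i ≤ P.k then P.t i else Q.t (i - P.k)
  first := by simp [P.first]
  last := by
    by_cases h : Q.k = 0
    · have hsu : s = u := by rw [← Q.first, ← h, Q.last]
      simp [h, P.last, hsu]
    · have h1 : ¬(P.k + Q.k ≤ P.k) := by omega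
      simp only [h1, if_false]
      rw [Nat.add_sub_cancel_left, Q.last]
  mono := by
    intro i hi
    have key : ∀ j, P.k ≤ j →
        (if j ≤ P.k then P.t j else Q.t (j - P.k)) = Q.t (j - P.k) := by
      intro j hj
      rcases eq_or_lt_of_le hj with h2 | h2
      · rw [if_pos (le_of_eq h2.symm), ← h2, Nat.sub_self, Q.first, P.last]
      · rw [if_neg (by omega)]
    rcases Nat.lt_or_ge i P.k with h | h
    · have h1 : i ≤ P.k := h.le
      have h2 : i + 1 ≤ P.k := h
      simp only [if_pos h1, if_pos h2]
      exact P.mono i h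
    · simp only [key i h, key (i + 1) (by omega)]
      have e : i + 1 - P.k = (i - P.k) + 1 := by omega
      rw [e]
      exact Q.mono _ (by omega)

@[simp] theorem concat_k {x s u : ℝ} (P : Subdivision x s) (Q : Subdivision s u) :
    (P.concat Q).k = P.k + Q.k := rfl

theorem concat_t {x s u : ℝ} (P : Subdivision x s) (Q : Subdivision s u) (i : ℕ) :
    (P.concat Q).t i = if i ≤ P.k then P.t i else Q.t (i - P.k) := rfl

theorem concat_t_left {x s u : ℝ} (P : Subdivision x s) (Q : Subdivision s u) {i : ℕ}
    (hi : i ≤ P.k) : (P.concat Q).t i = P.t i := by rw [concat_t, if_pos hi]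

theorem concat_t_right {x s u : ℝ} (P : Subdivision x s) (Q : Subdivision s u) {i : ℕ}
    (hi : P.k ≤ i) : (P.concat Q).t i = Q.t (i - P.k) := by
  rcases eq_or_lt_of_le hi with h2 | h2
  · rw [concat_t, if_pos (le_of_eq h2.symm), ← h2, Nat.sub_self, Q.first, P.last]
  · rw [concat_t, if_neg (by omega)]

theorem concat_mesh {x s u δ : ℝ} {P : Subdivision x s} {Q : Subdivision s u}
    (hP : P.MeshLE δ) (hQ : Q.MeshLE δ) : (P.concat Q).MeshLE δ := by
  intro i hi
  rcases Nat.lt_or_ge i P.k with h | h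
  · rw [concat_t_left _ _ (by omega : i + 1 ≤ P.k), concat_t_left _ _ h.le]
    exact hP i h
  · rw [concat_t_right _ _ (by omega : P.k ≤ i + 1), concat_t_right _ _ h]
    have e : i + 1 - P.k = (i - P.k) + 1 := by omega
    rw [e]
    exact hQ _ (by simp only [concat_k] at hi; omega)

theorem k_eq_zero {x : ℝ} (P : Subdivision x x) : P.k = 0 := by
  by_contra h
  exact absurd (P.t_lt_t (Nat.pos_of_ne_zero h) le_rfl) (by rw [P.first, P.last]; exact lt_irrefl x)

end Subdivision


noncomputable def sigmaSum {n : ℕ} (α : ℝ) (w : ℝ → EuclideanSpace ℝ (Fin n))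
    {a b : ℝ} (P : Subdivision a b) : ℝ :=
  (∑ i ∈ Finset.range P.k, ‖w (P.t (i + 1)) - w (P.t i)‖ ^ α) / Real.Gamma (α + 1)

noncomputable def gammaDelta {n : ℕ} (α : ℝ) (w : ℝ → EuclideanSpace ℝ (Fin n))
    (a b δ : ℝ) : ℝ≥0∞ :=
  ⨅ (P : Subdivision a b) (_ : P.MeshLE δ), ENNReal.ofReal (sigmaSum α w P)

noncomputable def massFn {n : ℕ} (α : ℝ) (w : ℝ → EuclideanSpace ℝ (Fin n))
    (a b : ℝ) : ℝ≥0∞ :=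
  ⨆ (δ : ℝ) (_ : 0 < δ), gammaDelta α w a b δ

/-- The staircase (rise) function S_F^α(t) = γ^α(F,a₀,t). -/
noncomputable def SF {n : ℕ} (α : ℝ) (w : ℝ → EuclideanSpace ℝ (Fin n))
    (a₀ : ℝ) (t : ℝ) : ℝ :=
  (massFn α w a₀ t).toReal

section Gamma

variable {n : ℕ} {α : ℝ} {w : ℝ → EuclideanSpace ℝ (Fin n)}

theorem sigmaSum_nonneg (hΓ : 0 ≤ Real.Gamma (α + 1)) {a b : ℝ} (P : Subdivision a b) :
    0 ≤ sigmaSum α w P :=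
  div_nonneg (Finset.sum_nonneg fun _ _ => Real.rpow_nonneg (norm_nonneg _) α) hΓ

theorem sigmaSum_refl (x : ℝ) : sigmaSum α w (Subdivision.refl x) = 0 := by
  simp [sigmaSum, Subdivision.refl]

theorem sigmaSum_single {x u : ℝ} (h : x < u) :
    sigmaSum α w (Subdivision.single h) = ‖w u - w x‖ ^ α / Real.Gamma (α + 1) := by
  simp [sigmaSum, Subdivision.single]

theorem sigmaSum_concat {x s u : ℝ} (P : Subdivision x s) (Q : Subdivision s u) :
    sigmaSum α w (P.concat Q) = sigmaSum α w P + sigmaSum α w Q := by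
  unfold sigmaSum
  rw [← add_div]
  congr 1
  rw [Subdivision.concat_k, Finset.sum_range_add]
  congr 1
  · refine Finset.sum_congr rfl fun i hi => ?_
    rw [Finset.mem_range] at hi
    rw [Subdivision.concat_t_left _ _ (by omega : i + 1 ≤ P.k),
      Subdivision.concat_t_left _ _ (by omega : i ≤ P.k)]
  · refine Finset.sum_congr rfl fun i hi => ?_
    rw [Finset.mem_range] at hi
    rw [Subdivision.concat_t_right _ _ (by omega : P.k ≤ P.k + i + 1),
      Subdivision.concat_t_right _ _ (by omega : P.k ≤ P.k + i)]
    have e1 : P.k + i + 1 - P.k = i + 1 := by omega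
    have e2 : P.k + i - P.k = i := by omega
    rw [e1, e2]

theorem gammaDelta_le {a b δ : ℝ} (P : Subdivision a b) (hP : P.MeshLE δ) :
    gammaDelta α w a b δ ≤ ENNReal.ofReal (sigmaSum α w P) :=
  iInf₂_le P hP

theorem gammaDelta_anti {a b δ δ' : ℝ} (h : δ ≤ δ') :
    gammaDelta α w a b δ' ≤ gammaDelta α w a b δ :=
  le_iInf₂ fun P hP => iInf₂_le P fun i hi => (hP i hi).trans h

theorem gammaDelta_le_massFn {a b δ : ℝ} (hδ : 0 < δ) :
    gammaDelta α w a b δ ≤ massFn α w a b :=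
  le_iSup₂ (f := fun (δ : ℝ) (_ : 0 < δ) => gammaDelta α w a b δ) δ hδ

theorem massFn_self (x : ℝ) : massFn α w x x = 0 := by
  refine le_antisymm (iSup₂_le fun δ hδ => ?_) zero_le
  have h := gammaDelta_le (w := w) (α := α) (δ := δ) (Subdivision.refl x)
    (fun i hi => absurd hi (by exact Nat.not_lt_zero i))
  rwa [sigmaSum_refl, ENNReal.ofReal_zero] at h

/-- helper for nested infima -/
theorem le_iInf₂_add_iInf₂ {ι ι' : Sort*} {p : ι → Prop} {q : ι' → Prop}
    {f : ι → ℝ≥0∞} {g : ι' → ℝ≥0∞} {C : ℝ≥0∞}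
    (h : ∀ i, p i → ∀ j, q j → C ≤ f i + g j) :
    C ≤ (⨅ i, ⨅ _ : p i, f i) + ⨅ j, ⨅ _ : q j, g j := by
  rw [ENNReal.iInf_add]
  refine le_iInf fun i => ?_
  rw [ENNReal.iInf_add]
  refine le_iInf fun hi => ?_
  rw [ENNReal.add_iInf]
  refine le_iInf fun j => ?_
  rw [ENNReal.add_iInf]
  exact le_iInf fun hj => h i hi j hj

theorem le_iInf₂_add_const {ι : Sort*} {p : ι → Prop} {f : ι → ℝ≥0∞} {C D : ℝ≥0∞}
    (h : ∀ i, p i → C ≤ f i + D) : C ≤ (⨅ i, ⨅ _ : p i, f i) + D := by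
  rw [ENNReal.iInf_add]
  refine le_iInf fun i => ?_
  rw [ENNReal.iInf_add]
  exact le_iInf fun hi => h i hi

theorem gammaDelta_triangle (hΓ : 0 ≤ Real.Gamma (α + 1)) {x s u δ : ℝ} :
    gammaDelta α w x u δ ≤ gammaDelta α w x s δ + gammaDelta α w s u δ := by
  have key : ∀ (P : Subdivision x s), P.MeshLE δ → ∀ (Q : Subdivision s u), Q.MeshLE δ →
      gammaDelta α w x u δ ≤
        ENNReal.ofReal (sigmaSum α w P) + ENNReal.ofReal (sigmaSum α w Q) := by
    intro P hP Q hQ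
    rw [← ENNReal.ofReal_add (sigmaSum_nonneg hΓ P) (sigmaSum_nonneg hΓ Q), ← sigmaSum_concat]
    exact gammaDelta_le _ (Subdivision.concat_mesh hP hQ)
  exact le_iInf₂_add_iInf₂ key

theorem gammaDelta_single (hΓ : 0 ≤ Real.Gamma (α + 1)) {x u δ : ℝ}
    (hxu : x ≤ u) (hm : u - x ≤ δ) :
    gammaDelta α w x u δ ≤ ENNReal.ofReal (‖w u - w x‖ ^ α / Real.Gamma (α + 1)) := by
  rcases eq_or_lt_of_le hxu with rfl | h
  · have h := gammaDelta_le (w := w) (α := α) (δ := δ) (Subdivision.refl x)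
      (fun i hi => absurd hi (Nat.not_lt_zero i))
    rw [sigmaSum_refl, ENNReal.ofReal_zero] at h
    exact h.trans zero_le
  · have hmesh : (Subdivision.single h).MeshLE δ := by
      intro i hi
      have hk : (Subdivision.single h).k = 1 := rfl
      rw [hk] at hi
      have : i = 0 := by omega
      subst this
      simpa [Subdivision.single] using hm
    have hle := gammaDelta_le (w := w) (α := α) (Subdivision.single h) hmesh
    rwa [sigmaSum_single] at hle

theorem massFn_triangle (hΓ : 0 ≤ Real.Gamma (α + 1)) {x s u : ℝ} :
    massFn α w x u ≤ massFn α w x s + massFn α w s u := by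
  refine iSup₂_le fun δ hδ => ?_
  exact (gammaDelta_triangle hΓ).trans
    (add_le_add (gammaDelta_le_massFn hδ) (gammaDelta_le_massFn hδ))

end Gamma

section Split

variable {n : ℕ} {α : ℝ} {w : ℝ → EuclideanSpace ℝ (Fin n)}

theorem exists_modulus {a₀ b₀ : ℝ} (hw : ContinuousOn w (Icc a₀ b₀)) {ε : ℝ} (hε : 0 < ε) :
    ∃ δ > (0:ℝ), ∀ p ∈ Icc a₀ b₀, ∀ q ∈ Icc a₀ b₀, |p - q| ≤ δ → ‖w p - w q‖ ≤ ε := by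
  have huc := isCompact_Icc.uniformContinuousOn_of_continuous hw
  rw [Metric.uniformContinuousOn_iff_le] at huc
  obtain ⟨δ, hδ, h⟩ := huc ε hε
  refine ⟨δ, hδ, fun p hp q hq hpq => ?_⟩
  have h2 := h p hp q hq (by rwa [Real.dist_eq])
  rwa [dist_eq_norm] at h2

theorem rpow_small_aux (hα1 : 1 ≤ α) {c : ℝ} (hc : 0 < c) :
    ∃ e > (0:ℝ), ∀ η : ℝ, 0 ≤ η → η ≤ e → η ^ α ≤ c := by
  refine ⟨min 1 c, lt_min one_pos hc, fun η h0 hη => ?_⟩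
  have h1 : η ^ α ≤ (min 1 c) ^ α := Real.rpow_le_rpow h0 hη (by linarith)
  have h2 : (min 1 c) ^ α ≤ (min 1 c) ^ (1:ℝ) :=
    Real.rpow_le_rpow_of_exponent_ge (lt_min one_pos hc) (min_le_left _ _) hα1
  rw [Real.rpow_one] at h2
  exact h1.trans (h2.trans (min_le_right _ _))

theorem gammaDelta_split (hΓ : 0 < Real.Gamma (α + 1)) (hα0 : 0 ≤ α)
    {a₀ b₀ x s u δ η : ℝ} (hax : a₀ ≤ x) (hub : u ≤ b₀) (hxs : x < s) (hsu : s < u)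
    (hη : 0 ≤ η)
    (hmod : ∀ p ∈ Icc a₀ b₀, ∀ q ∈ Icc a₀ b₀, |p - q| ≤ δ → ‖w p - w q‖ ≤ η) :
    gammaDelta α w x s δ + gammaDelta α w s u δ ≤
      gammaDelta α w x u δ + ENNReal.ofReal (2 * η ^ α / Real.Gamma (α + 1)) := by
  refine le_iInf₂_add_const fun P hP => ?_
  have hk : 0 < P.k := by
    rcases Nat.eq_zero_or_pos P.k with h0 | h
    · exfalso
      have h2 := P.last
      rw [h0, P.first] at h2
      linarith
    · exact h
  have hmem : ∀ i, i ≤ P.k → P.t i ∈ Icc a₀ b₀ := fun i hi => by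
    have hm := P.mem_Icc hi
    exact ⟨hax.trans hm.1, hm.2.trans hub⟩
  have hsmem : s ∈ Icc a₀ b₀ := ⟨hax.trans hxs.le, hsu.le.trans hub⟩
  -- splitting index j
  have hJne : ((Finset.range P.k).filter (fun i => P.t i < s)).Nonempty := by
    refine ⟨0, ?_⟩
    simp only [Finset.mem_filter, Finset.mem_range]
    exact ⟨hk, by rw [P.first]; exact hxs⟩
  set j := ((Finset.range P.k).filter (fun i => P.t i < s)).max' hJne with hjdef
  have hjmem := Finset.max'_mem _ hJne
  rw [Finset.mem_filter, Finset.mem_range] at hjmem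
  obtain ⟨hjk, hjs⟩ := hjmem
  have hs1 : s ≤ P.t (j + 1) := by
    by_contra hcon
    push_neg at hcon
    have hj1k : j + 1 < P.k := by
      rcases Nat.lt_or_ge (j + 1) P.k with h1 | h1
      · exact h1
      · exfalso
        have he : j + 1 = P.k := by omega
        rw [he, P.last] at hcon
        linarith
    have hmem2 : j + 1 ∈ (Finset.range P.k).filter (fun i => P.t i < s) := by
      rw [Finset.mem_filter, Finset.mem_range]; exact ⟨hj1k, hcon⟩
    have := Finset.le_max' _ _ hmem2
    omega
  -- increment bounds for the two new cells
  have hbound1 : ‖w s - w (P.t j)‖ ^ α ≤ η ^ α := by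
    have hd : |s - P.t j| ≤ δ := by
      rw [abs_of_nonneg (by linarith)]
      have := hP j hjk
      linarith
    exact Real.rpow_le_rpow (norm_nonneg _) (hmod s hsmem (P.t j) (hmem j hjk.le) hd) hα0
  have hbound2 : ‖w (P.t (j + 1)) - w s‖ ^ α ≤ η ^ α := by
    have hd : |P.t (j + 1) - s| ≤ δ := by
      rw [abs_of_nonneg (by linarith)]
      have := hP j hjk
      linarith
    exact Real.rpow_le_rpow (norm_nonneg _) (hmod (P.t (j+1)) (hmem _ hjk) s hsmem hd) hα0
  -- the initial piece P1
  set t1 : ℕ → ℝ := fun i => if i ≤ j then P.t i else s with ht1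
  have h1first : t1 0 = x := by
    simp only [ht1, Nat.zero_le, if_pos]
    exact P.first
  have h1last : t1 (j + 1) = s := by
    simp only [ht1, if_neg (by omega : ¬ (j + 1 ≤ j))]
  have h1mono : ∀ i < j + 1, t1 i < t1 (i + 1) := by
    intro i hi
    rcases Nat.lt_or_ge i j with h | h
    · simp only [ht1, if_pos h.le, if_pos (by omega : i + 1 ≤ j)]
      exact P.mono i (by omega)
    · have hij : i = j := by omega
      rw [hij]
      simp only [ht1, if_pos le_rfl, if_neg (by omega : ¬ (j + 1 ≤ j))]
      exact hjs
  set P1 : Subdivision x s := ⟨j + 1, t1, h1first, h1last, h1mono⟩ with hP1def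
  have hmesh1 : P1.MeshLE δ := by
    intro i hi
    have hi' : i < j + 1 := hi
    show t1 (i + 1) - t1 i ≤ δ
    rcases Nat.lt_or_ge i j with h | h
    · simp only [ht1, if_pos h.le, if_pos (by omega : i + 1 ≤ j)]
      exact hP i (by omega)
    · have hij : i = j := by omega
      rw [hij]
      simp only [ht1, if_pos le_rfl, if_neg (by omega : ¬ (j + 1 ≤ j))]
      have := hP j hjk
      linarith
  have hσ1 : sigmaSum α w P1 =
      ((∑ i ∈ Finset.range j, ‖w (P.t (i + 1)) - w (P.t i)‖ ^ α) + ‖w s - w (P.t j)‖ ^ α)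
        / Real.Gamma (α + 1) := by
    unfold sigmaSum
    congr 1
    have hk1 : P1.k = j + 1 := rfl
    rw [hk1]
    have hfun : ∀ i ∈ Finset.range (j + 1),
        ‖w (P1.t (i + 1)) - w (P1.t i)‖ ^ α =
        ‖w (t1 (i + 1)) - w (t1 i)‖ ^ α := fun i _ => rfl
    rw [Finset.sum_congr rfl hfun, Finset.sum_range_succ]
    congr 1
    · refine Finset.sum_congr rfl fun i hi => ?_
      rw [Finset.mem_range] at hi
      simp only [ht1, if_pos (by omega : i + 1 ≤ j), if_pos (by omega : i ≤ j)]
    · simp only [ht1, if_neg (by omega : ¬ (j + 1 ≤ j)), if_pos le_rfl]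
  -- decomposition of the sum of P
  have hsplitk : P.k = (j + 1) + (P.k - (j + 1)) := by omega
  have hPsum : ∑ i ∈ Finset.range P.k, ‖w (P.t (i + 1)) - w (P.t i)‖ ^ α =
      ((∑ i ∈ Finset.range j, ‖w (P.t (i + 1)) - w (P.t i)‖ ^ α)
        + ‖w (P.t (j + 1)) - w (P.t j)‖ ^ α)
      + ∑ i ∈ Finset.range (P.k - (j + 1)),
          ‖w (P.t (j + 1 + i + 1)) - w (P.t (j + 1 + i))‖ ^ α := by
    conv_lhs => rw [hsplitk]
    rw [Finset.sum_range_add, Finset.sum_range_succ]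
  -- construct the tail piece P2 (two cases) together with the key estimate
  have hσP : sigmaSum α w P =
      (((∑ i ∈ Finset.range j, ‖w (P.t (i + 1)) - w (P.t i)‖ ^ α)
        + ‖w (P.t (j + 1)) - w (P.t j)‖ ^ α)
      + ∑ i ∈ Finset.range (P.k - (j + 1)),
          ‖w (P.t (j + 1 + i + 1)) - w (P.t (j + 1 + i))‖ ^ α) / Real.Gamma (α + 1) := by
    unfold sigmaSum
    rw [hPsum]
  have htermj : 0 ≤ ‖w (P.t (j + 1)) - w (P.t j)‖ ^ α := Real.rpow_nonneg (norm_nonneg _) α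
  obtain ⟨P2, hmesh2, hkey⟩ : ∃ P2 : Subdivision s u, P2.MeshLE δ ∧
      sigmaSum α w P1 + sigmaSum α w P2 ≤
        sigmaSum α w P + 2 * η ^ α / Real.Gamma (α + 1) := by
    rcases eq_or_lt_of_le hs1 with heq | hlt
    · -- s is already a partition point : s = P.t (j+1)
      have h2first : P.t (j + 1 + 0) = s := by rw [Nat.add_zero]; exact heq.symm
      have h2last : P.t (j + 1 + (P.k - (j + 1))) = u := by
        have he : j + 1 + (P.k - (j + 1)) = P.k := by omega
        rw [he, P.last]
      have h2mono : ∀ i < P.k - (j + 1), P.t (j + 1 + i) < P.t (j + 1 + (i + 1)) :=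
        fun i hi => P.mono (j + 1 + i) (by omega)
      refine ⟨⟨P.k - (j + 1), fun i => P.t (j + 1 + i), h2first, h2last, h2mono⟩, ?_, ?_⟩
      · intro i hi
        have hi' : i < P.k - (j + 1) := hi
        exact hP (j + 1 + i) (by omega)
      · have hσ2 : sigmaSum α w
            (⟨P.k - (j + 1), fun i => P.t (j + 1 + i), h2first, h2last, h2mono⟩ :
              Subdivision s u) =
            (∑ i ∈ Finset.range (P.k - (j + 1)),
              ‖w (P.t (j + 1 + i + 1)) - w (P.t (j + 1 + i))‖ ^ α)
              / Real.Gamma (α + 1) := rfl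
        rw [hσ1, hσ2, hσP, ← add_div]
        rw [heq]
        refine le_add_of_le_of_nonneg le_rfl ?_
        have h2 : 0 ≤ 2 * η ^ α := by
          have := Real.rpow_nonneg hη α
          linarith
        exact div_nonneg h2 hΓ.le
    · -- s is strictly inside the cell (j, j+1)
      have hkj : P.k - j = (P.k - (j + 1)) + 1 := by omega
      set t2 : ℕ → ℝ := fun i => if i = 0 then s else P.t (j + i) with ht2
      have h2first : t2 0 = s := by simp [ht2]
      have h2last : t2 (P.k - j) = u := by
        simp only [ht2, if_neg (by omega : ¬ (P.k - j = 0))]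
        have he : j + (P.k - j) = P.k := by omega
        rw [he, P.last]
      have h2mono : ∀ i < P.k - j, t2 i < t2 (i + 1) := by
        intro i hi
        rcases Nat.eq_zero_or_pos i with rfl | h
        · simp only [ht2, if_pos rfl, if_neg (by omega : ¬ (0 + 1 = 0)), Nat.zero_add]
          exact hlt
        · simp only [ht2, if_neg (by omega : ¬ (i = 0)), if_neg (by omega : ¬ (i + 1 = 0))]
          exact P.mono (j + i) (by omega)
      refine ⟨⟨P.k - j, t2, h2first, h2last, h2mono⟩, ?_, ?_⟩
      · intro i hi
        have hi' : i < P.k - j := hi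
        show t2 (i + 1) - t2 i ≤ δ
        rcases Nat.eq_zero_or_pos i with rfl | h
        · simp only [ht2, if_pos rfl, if_neg (by omega : ¬ (0 + 1 = 0)), Nat.zero_add]
          have := hP j hjk
          linarith
        · simp only [ht2, if_neg (by omega : ¬ (i = 0)), if_neg (by omega : ¬ (i + 1 = 0))]
          exact hP (j + i) (by omega)
      · have hσ2 : sigmaSum α w
            (⟨P.k - j, t2, h2first, h2last, h2mono⟩ : Subdivision s u) =
            ((∑ i ∈ Finset.range (P.k - (j + 1)),
                ‖w (P.t (j + 1 + i + 1)) - w (P.t (j + 1 + i))‖ ^ α)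
              + ‖w (P.t (j + 1)) - w s‖ ^ α)
              / Real.Gamma (α + 1) := by
          unfold sigmaSum
          congr 1
          show ∑ i ∈ Finset.range (P.k - j), ‖w (t2 (i + 1)) - w (t2 i)‖ ^ α = _
          rw [hkj, Finset.sum_range_succ']
          have hf0 : ‖w (t2 (0 + 1)) - w (t2 0)‖ ^ α = ‖w (P.t (j + 1)) - w s‖ ^ α := by
            simp only [ht2, Nat.zero_add, if_pos rfl, if_neg (one_ne_zero)]
          rw [hf0]
          congr 1
          refine Finset.sum_congr rfl fun i hi => ?_
          simp only [ht2, if_neg (by omega : ¬ (i + 1 + 1 = 0)),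
            if_neg (by omega : ¬ (i + 1 = 0))]
          have e1 : j + (i + 1 + 1) = j + 1 + i + 1 := by omega
          have e2 : j + (i + 1) = j + 1 + i := by omega
          rw [e1, e2]
        rw [hσ1, hσ2, hσP, ← add_div, ← add_div]
        have hnum : (∑ i ∈ Finset.range j, ‖w (P.t (i + 1)) - w (P.t i)‖ ^ α)
              + ‖w s - w (P.t j)‖ ^ α
            + ((∑ i ∈ Finset.range (P.k - (j + 1)),
                ‖w (P.t (j + 1 + i + 1)) - w (P.t (j + 1 + i))‖ ^ α)
              + ‖w (P.t (j + 1)) - w s‖ ^ α) ≤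
            (∑ i ∈ Finset.range j, ‖w (P.t (i + 1)) - w (P.t i)‖ ^ α)
              + ‖w (P.t (j + 1)) - w (P.t j)‖ ^ α
            + (∑ i ∈ Finset.range (P.k - (j + 1)),
                ‖w (P.t (j + 1 + i + 1)) - w (P.t (j + 1 + i))‖ ^ α)
            + 2 * η ^ α := by
          linarith [hbound1, hbound2, htermj]
        exact (div_le_div_iff_of_pos_right hΓ).mpr hnum
  calc gammaDelta α w x s δ + gammaDelta α w s u δ
      ≤ ENNReal.ofReal (sigmaSum α w P1) + ENNReal.ofReal (sigmaSum α w P2) :=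
        add_le_add (gammaDelta_le _ hmesh1) (gammaDelta_le _ hmesh2)
    _ = ENNReal.ofReal (sigmaSum α w P1 + sigmaSum α w P2) :=
        (ENNReal.ofReal_add (sigmaSum_nonneg hΓ.le P1) (sigmaSum_nonneg hΓ.le P2)).symm
    _ ≤ ENNReal.ofReal (sigmaSum α w P + 2 * η ^ α / Real.Gamma (α + 1)) :=
        ENNReal.ofReal_le_ofReal hkey
    _ ≤ _ := ENNReal.ofReal_add_le

end Split

section Mass

variable {n : ℕ} {α : ℝ} {w : ℝ → EuclideanSpace ℝ (Fin n)} {a₀ b₀ : ℝ}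

theorem massFn_superadd (hw : ContinuousOn w (Icc a₀ b₀)) (hΓ : 0 < Real.Gamma (α + 1))
    (hα1 : 1 ≤ α) {x s u : ℝ} (hax : a₀ ≤ x) (hxs : x ≤ s) (hsu : s ≤ u) (hub : u ≤ b₀) :
    massFn α w x s + massFn α w s u ≤ massFn α w x u := by
  have hα0 : (0:ℝ) ≤ α := by linarith
  rcases eq_or_lt_of_le hxs with rfl | hxs'
  · rw [massFn_self, zero_add]
  rcases eq_or_lt_of_le hsu with rfl | hsu'
  · rw [massFn_self, add_zero]
  refine ENNReal.le_of_forall_pos_le_add fun ε hε _ => ?_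
  have hεR : (0:ℝ) < ε := hε
  obtain ⟨e, he, hepow⟩ := rpow_small_aux hα1
    (show (0:ℝ) < ε * Real.Gamma (α + 1) / 2 by positivity)
  obtain ⟨δ₀, hδ₀, hmod⟩ := exists_modulus hw he
  have hbound : ∀ δ, 0 < δ → δ ≤ δ₀ →
      gammaDelta α w x s δ + gammaDelta α w s u δ ≤ massFn α w x u + ε := by
    intro δ hδ hδδ₀
    have hmod' : ∀ p ∈ Icc a₀ b₀, ∀ q ∈ Icc a₀ b₀, |p - q| ≤ δ → ‖w p - w q‖ ≤ e :=
      fun p hp q hq hpq => hmod p hp q hq (hpq.trans hδδ₀)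
    have h1 := gammaDelta_split (w := w) hΓ hα0 hax hub hxs' hsu' he.le hmod'
    have h2 : ENNReal.ofReal (2 * e ^ α / Real.Gamma (α + 1)) ≤ (ε : ℝ≥0∞) := by
      rw [← ENNReal.ofReal_coe_nnreal]
      refine ENNReal.ofReal_le_ofReal ?_
      rw [div_le_iff₀ hΓ]
      have h3 := hepow e he.le le_rfl
      linarith
    calc gammaDelta α w x s δ + gammaDelta α w s u δ
        ≤ gammaDelta α w x u δ + ENNReal.ofReal (2 * e ^ α / Real.Gamma (α + 1)) := h1
      _ ≤ massFn α w x u + ε := add_le_add (gammaDelta_le_massFn hδ) h2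
  refine ENNReal.biSup_add_biSup_le' (p := fun δ : ℝ => 0 < δ) (q := fun δ : ℝ => 0 < δ)
    ⟨1, one_pos⟩ ⟨1, one_pos⟩ fun δ1 h1 δ2 h2 => ?_
  have hm : 0 < min δ1 (min δ2 δ₀) := lt_min h1 (lt_min h2 hδ₀)
  calc gammaDelta α w x s δ1 + gammaDelta α w s u δ2
      ≤ gammaDelta α w x s (min δ1 (min δ2 δ₀)) + gammaDelta α w s u (min δ1 (min δ2 δ₀)) := by
        refine add_le_add (gammaDelta_anti ?_) (gammaDelta_anti ?_)
        · exact min_le_left _ _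
        · exact (min_le_right _ _).trans (min_le_left _ _)
    _ ≤ massFn α w x u + ε := hbound _ hm ((min_le_right _ _).trans (min_le_right _ _))

end Mass

section Small

variable {n : ℕ} {α : ℝ} {w : ℝ → EuclideanSpace ℝ (Fin n)} {a₀ b₀ : ℝ}

theorem massFn_ne_top (hw : ContinuousOn w (Icc a₀ b₀)) (hΓ : 0 < Real.Gamma (α + 1))
    (hα1 : 1 ≤ α) (hfin : ∀ t ∈ Icc a₀ b₀, massFn α w a₀ t ≠ ⊤)
    {x y : ℝ} (hax : a₀ ≤ x) (hxy : x ≤ y) (hyb : y ≤ b₀) :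
    massFn α w x y ≠ ⊤ := by
  have h1 : massFn α w a₀ x + massFn α w x y ≤ massFn α w a₀ y :=
    massFn_superadd hw hΓ hα1 le_rfl hax hxy hyb
  have h2 : massFn α w x y ≤ massFn α w a₀ y := le_add_self.trans h1
  exact ne_top_of_le_ne_top (hfin y ⟨hax.trans hxy, hyb⟩) h2

/-- mass of small right-intervals at `x` is small -/
theorem massFn_Ioc_small (hw : ContinuousOn w (Icc a₀ b₀)) (hΓ : 0 < Real.Gamma (α + 1))
    (hα1 : 1 ≤ α) {x u : ℝ} (hax : a₀ ≤ x) (hxu : x < u) (hub : u ≤ b₀)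
    (hfin' : massFn α w x u ≠ ⊤) {ε : ℝ} (hε : 0 < ε) :
    ∃ s, x < s ∧ s ≤ u ∧ massFn α w x s ≤ ENNReal.ofReal ε := by
  have hα0 : (0:ℝ) ≤ α := by linarith
  set R := ⨆ (s : ℝ) (_ : s ∈ Ioc x u), massFn α w s u with hR
  have hMR : massFn α w x u ≤ R := by
    refine ENNReal.le_of_forall_pos_le_add fun ε' hε' _ => ?_
    have hε'R : (0:ℝ) < ε' := hε'
    obtain ⟨e, he, hepow⟩ := rpow_small_aux hα1
      (show (0:ℝ) < ε' * Real.Gamma (α + 1) by positivity)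
    obtain ⟨δ₀, hδ₀, hmod⟩ := exists_modulus hw he
    refine iSup₂_le fun δ hδ => ?_
    set δ' := min δ (min δ₀ (u - x)) with hδ'def
    have hδ'pos : 0 < δ' := lt_min hδ (lt_min hδ₀ (by linarith))
    have hδ'δ₀ : δ' ≤ δ₀ := (min_le_right _ _).trans (min_le_left _ _)
    have hδ'ux : δ' ≤ u - x := (min_le_right _ _).trans (min_le_right _ _)
    have hxδmem : x + δ' ∈ Icc a₀ b₀ := ⟨by linarith, by linarith⟩
    have hxmem : x ∈ Icc a₀ b₀ := ⟨hax, by linarith⟩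
    have hnorm : ‖w (x + δ') - w x‖ ≤ e := by
      refine hmod _ hxδmem _ hxmem ?_
      rw [abs_of_nonneg (by linarith)]
      linarith
    have hpow : ‖w (x + δ') - w x‖ ^ α ≤ ε' * Real.Gamma (α + 1) :=
      hepow _ (norm_nonneg _) hnorm
    calc gammaDelta α w x u δ
        ≤ gammaDelta α w x u δ' := gammaDelta_anti (min_le_left _ _)
      _ ≤ gammaDelta α w x (x + δ') δ' + gammaDelta α w (x + δ') u δ' :=
          gammaDelta_triangle hΓ.le
      _ ≤ ENNReal.ofReal (‖w (x + δ') - w x‖ ^ α / Real.Gamma (α + 1))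
            + massFn α w (x + δ') u := by
          refine add_le_add (gammaDelta_single hΓ.le (by linarith) (by linarith)) ?_
          exact gammaDelta_le_massFn hδ'pos
      _ ≤ (ε' : ℝ≥0∞) + R := by
          refine add_le_add ?_ ?_
          · rw [← ENNReal.ofReal_coe_nnreal]
            refine ENNReal.ofReal_le_ofReal ?_
            rw [div_le_iff₀ hΓ]
            linarith
          · exact le_iSup₂ (f := fun (s : ℝ) (_ : s ∈ Ioc x u) => massFn α w s u)
              (x + δ') ⟨by linarith, by linarith⟩
      _ = R + ε' := add_comm _ _
  by_cases h0 : massFn α w x u ≤ ENNReal.ofReal ε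
  · exact ⟨u, hxu, le_rfl, h0⟩
  push_neg at h0
  have hne0 : massFn α w x u ≠ 0 := by
    intro h
    rw [h] at h0
    exact absurd h0 (by simp)
  have hlt : massFn α w x u - ENNReal.ofReal ε < massFn α w x u :=
    ENNReal.sub_lt_self hfin' hne0 (by simp [hε])
  have hlt2 : massFn α w x u - ENNReal.ofReal ε < R := hlt.trans_le hMR
  rw [hR, lt_iSup_iff] at hlt2
  obtain ⟨s, hlt3⟩ := hlt2
  rw [lt_iSup_iff] at hlt3
  obtain ⟨hs, hlt4⟩ := hlt3
  have hsup : massFn α w x s + massFn α w s u ≤ massFn α w x u :=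
    massFn_superadd hw hΓ hα1 hax hs.1.le hs.2 hub
  refine ⟨s, hs.1, hs.2, ?_⟩
  have hfs : massFn α w s u ≠ ⊤ := ne_top_of_le_ne_top hfin' (le_add_self.trans hsup)
  have h5 : massFn α w x u ≤ massFn α w s u + ENNReal.ofReal ε := tsub_le_iff_right.mp hlt4.le
  have h6 : massFn α w x s + massFn α w s u ≤ ENNReal.ofReal ε + massFn α w s u :=
    hsup.trans (h5.trans_eq (add_comm _ _))
  exact (ENNReal.add_le_add_iff_right hfs).mp h6

/-- mass of small left-intervals at `u` is small -/
theorem massFn_Ico_small (hw : ContinuousOn w (Icc a₀ b₀)) (hΓ : 0 < Real.Gamma (α + 1))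
    (hα1 : 1 ≤ α) {x u : ℝ} (hax : a₀ ≤ x) (hxu : x < u) (hub : u ≤ b₀)
    (hfin' : massFn α w x u ≠ ⊤) {ε : ℝ} (hε : 0 < ε) :
    ∃ s, x ≤ s ∧ s < u ∧ massFn α w s u ≤ ENNReal.ofReal ε := by
  have hα0 : (0:ℝ) ≤ α := by linarith
  set L := ⨆ (s : ℝ) (_ : s ∈ Ico x u), massFn α w x s with hL
  have hML : massFn α w x u ≤ L := by
    refine ENNReal.le_of_forall_pos_le_add fun ε' hε' _ => ?_
    have hε'R : (0:ℝ) < ε' := hε'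
    obtain ⟨e, he, hepow⟩ := rpow_small_aux hα1
      (show (0:ℝ) < ε' * Real.Gamma (α + 1) by positivity)
    obtain ⟨δ₀, hδ₀, hmod⟩ := exists_modulus hw he
    refine iSup₂_le fun δ hδ => ?_
    set δ' := min δ (min δ₀ (u - x)) with hδ'def
    have hδ'pos : 0 < δ' := lt_min hδ (lt_min hδ₀ (by linarith))
    have hδ'δ₀ : δ' ≤ δ₀ := (min_le_right _ _).trans (min_le_left _ _)
    have hδ'ux : δ' ≤ u - x := (min_le_right _ _).trans (min_le_right _ _)
    have huδmem : u - δ' ∈ Icc a₀ b₀ := ⟨by linarith, by linarith⟩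
    have humem : u ∈ Icc a₀ b₀ := ⟨by linarith, hub⟩
    have hnorm : ‖w u - w (u - δ')‖ ≤ e := by
      refine hmod _ humem _ huδmem ?_
      rw [abs_of_nonneg (by linarith)]
      linarith
    have hpow : ‖w u - w (u - δ')‖ ^ α ≤ ε' * Real.Gamma (α + 1) :=
      hepow _ (norm_nonneg _) hnorm
    calc gammaDelta α w x u δ
        ≤ gammaDelta α w x u δ' := gammaDelta_anti (min_le_left _ _)
      _ ≤ gammaDelta α w x (u - δ') δ' + gammaDelta α w (u - δ') u δ' :=
          gammaDelta_triangle hΓ.le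
      _ ≤ massFn α w x (u - δ')
            + ENNReal.ofReal (‖w u - w (u - δ')‖ ^ α / Real.Gamma (α + 1)) := by
          refine add_le_add (gammaDelta_le_massFn hδ'pos) ?_
          exact gammaDelta_single hΓ.le (by linarith) (by linarith)
      _ ≤ L + (ε' : ℝ≥0∞) := by
          refine add_le_add ?_ ?_
          · exact le_iSup₂ (f := fun (s : ℝ) (_ : s ∈ Ico x u) => massFn α w x s)
              (u - δ') ⟨by linarith, by linarith⟩
          · rw [← ENNReal.ofReal_coe_nnreal]
            refine ENNReal.ofReal_le_ofReal ?_
            rw [div_le_iff₀ hΓ]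
            linarith
  by_cases h0 : massFn α w x u ≤ ENNReal.ofReal ε
  · exact ⟨x, le_rfl, hxu, h0⟩
  push_neg at h0
  have hne0 : massFn α w x u ≠ 0 := by
    intro h
    rw [h] at h0
    exact absurd h0 (by simp)
  have hlt : massFn α w x u - ENNReal.ofReal ε < massFn α w x u :=
    ENNReal.sub_lt_self hfin' hne0 (by simp [hε])
  have hlt2 : massFn α w x u - ENNReal.ofReal ε < L := hlt.trans_le hML
  rw [hL, lt_iSup_iff] at hlt2
  obtain ⟨s, hlt3⟩ := hlt2
  rw [lt_iSup_iff] at hlt3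
  obtain ⟨hs, hlt4⟩ := hlt3
  have hsup : massFn α w x s + massFn α w s u ≤ massFn α w x u :=
    massFn_superadd hw hΓ hα1 hax hs.1 hs.2.le hub
  refine ⟨s, hs.1, hs.2, ?_⟩
  have hfs : massFn α w x s ≠ ⊤ := ne_top_of_le_ne_top hfin' (le_self_add.trans hsup)
  have h5 : massFn α w x u ≤ massFn α w x s + ENNReal.ofReal ε := tsub_le_iff_right.mp hlt4.le
  have h6 : massFn α w s u + massFn α w x s ≤ ENNReal.ofReal ε + massFn α w x s := by
    calc massFn α w s u + massFn α w x s = massFn α w x s + massFn α w s u := add_comm _ _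
      _ ≤ massFn α w x u := hsup
      _ ≤ massFn α w x s + ENNReal.ofReal ε := h5
      _ = ENNReal.ofReal ε + massFn α w x s := add_comm _ _
  exact (ENNReal.add_le_add_iff_right hfs).mp h6

end Small

section Staircase

variable {n : ℕ} {α : ℝ} {w : ℝ → EuclideanSpace ℝ (Fin n)} {a₀ b₀ : ℝ}

theorem SF_le_add (hw : ContinuousOn w (Icc a₀ b₀)) (hΓ : 0 < Real.Gamma (α + 1))
    (hα1 : 1 ≤ α) (hfin : ∀ t ∈ Icc a₀ b₀, massFn α w a₀ t ≠ ⊤)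
    {x y : ℝ} (hax : a₀ ≤ x) (hxy : x ≤ y) (hyb : y ≤ b₀) :
    SF α w a₀ y ≤ SF α w a₀ x + (massFn α w x y).toReal := by
  have h1 : massFn α w a₀ y ≤ massFn α w a₀ x + massFn α w x y := massFn_triangle hΓ.le
  have hx' : massFn α w a₀ x ≠ ⊤ := hfin x ⟨le_refl a₀ |>.trans hax, hxy.trans hyb⟩
  have hxy' : massFn α w x y ≠ ⊤ := massFn_ne_top hw hΓ hα1 hfin hax hxy hyb
  have h2 := ENNReal.toReal_mono (ENNReal.add_ne_top.mpr ⟨hx', hxy'⟩) h1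
  rwa [ENNReal.toReal_add hx' hxy'] at h2

theorem SF_continuousOn (hw : ContinuousOn w (Icc a₀ b₀)) (hΓ : 0 < Real.Gamma (α + 1))
    (hα1 : 1 ≤ α) (hfin : ∀ t ∈ Icc a₀ b₀, massFn α w a₀ t ≠ ⊤)
    (hS : StrictMonoOn (SF α w a₀) (Icc a₀ b₀)) :
    ContinuousOn (SF α w a₀) (Icc a₀ b₀) := by
  intro x hx
  rw [Metric.continuousWithinAt_iff]
  intro ε hε
  have hmono := hS.monotoneOn
  -- a point controlling from the right
  obtain ⟨sp, hspx, hsp⟩ : ∃ sp, x < sp ∧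
      ∀ y ∈ Icc a₀ b₀, x ≤ y → y ≤ sp → SF α w a₀ y - SF α w a₀ x < ε := by
    rcases lt_or_ge x b₀ with hxb | hxb
    · obtain ⟨s, hs1, hs2, hs3⟩ := massFn_Ioc_small hw hΓ hα1 hx.1 hxb le_rfl
        (massFn_ne_top hw hΓ hα1 hfin hx.1 hxb.le le_rfl) (half_pos hε)
      refine ⟨s, hs1, fun y hy hxy hys => ?_⟩
      have hmxy : massFn α w x y ≤ massFn α w x s :=
        le_self_add.trans (massFn_superadd hw hΓ hα1 hx.1 hxy hys hs2)
      have htr : (massFn α w x y).toReal ≤ ε / 2 := by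
        refine ENNReal.toReal_le_of_le_ofReal (by linarith) (hmxy.trans hs3)
      have h1 := SF_le_add hw hΓ hα1 hfin hx.1 hxy hy.2
      linarith
    · refine ⟨x + 1, by linarith, fun y hy hxy hys => ?_⟩
      have : y = x := le_antisymm (hy.2.trans hxb) hxy
      rw [this]
      simpa using hε
  -- a point controlling from the left
  obtain ⟨sm, hsmx, hsm⟩ : ∃ sm, sm < x ∧
      ∀ y ∈ Icc a₀ b₀, sm ≤ y → y ≤ x → SF α w a₀ x - SF α w a₀ y < ε := by
    rcases lt_or_ge a₀ x with hax | hax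
    · obtain ⟨s, hs1, hs2, hs3⟩ := massFn_Ico_small hw hΓ hα1 le_rfl hax hx.2
        (massFn_ne_top hw hΓ hα1 hfin le_rfl hax.le hx.2) (half_pos hε)
      refine ⟨s, hs2, fun y hy hsy hyx => ?_⟩
      have hmyx : massFn α w y x ≤ massFn α w s x :=
        le_add_self.trans (massFn_superadd hw hΓ hα1 hs1 hsy hyx hx.2)
      have htr : (massFn α w y x).toReal ≤ ε / 2 :=
        ENNReal.toReal_le_of_le_ofReal (by linarith) (hmyx.trans hs3)
      have h1 := SF_le_add hw hΓ hα1 hfin hy.1 hyx hx.2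
      linarith
    · refine ⟨x - 1, by linarith, fun y hy hsy hyx => ?_⟩
      have : y = x := le_antisymm hyx (hax.trans hy.1)
      rw [this]
      simpa using hε
  refine ⟨min (sp - x) (x - sm), lt_min (by linarith) (by linarith), fun y hy hdist => ?_⟩
  rw [Real.dist_eq] at hdist
  rw [Real.dist_eq]
  have h1 : y - x < sp - x := lt_of_abs_lt (hdist.trans_le (min_le_left _ _))
  have h2 : x - y < x - sm := lt_of_abs_lt ((abs_sub_comm y x ▸ hdist).trans_le (min_le_right _ _))
  rcases le_total x y with hxy | hyx
  · have hb := hsp y hy hxy (by linarith)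
    have hle : SF α w a₀ x ≤ SF α w a₀ y := hmono hx hy hxy
    rw [abs_of_nonneg (by linarith)]
    linarith
  · have hb := hsm y hy (by linarith) hyx
    have hle : SF α w a₀ y ≤ SF α w a₀ x := hmono hy hx hyx
    rw [abs_of_nonpos (by linarith)]
    linarith

end Staircase


/-- `l` is the F-limit of `f` as θ' → θ through points of `F`. -/
def IsFLimit {n : ℕ} (F : Set (EuclideanSpace ℝ (Fin n)))
    (f : EuclideanSpace ℝ (Fin n) → ℝ) (θ : EuclideanSpace ℝ (Fin n)) (l : ℝ) : Prop :=
  ∀ ε > (0 : ℝ), ∃ δ > (0 : ℝ), ∀ θ' ∈ F, θ' ≠ θ → ‖θ' - θ‖ < δ → |f θ' - l| < ε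

/-- `f` is F-continuous at θ. -/
def FContinuousAt {n : ℕ} (F : Set (EuclideanSpace ℝ (Fin n)))
    (f : EuclideanSpace ℝ (Fin n) → ℝ) (θ : EuclideanSpace ℝ (Fin n)) : Prop :=
  IsFLimit F f θ (f θ)

/-- The F^α-derivative of `f` at θ is `l`:
l = F-lim_{θ'→θ} (f(θ') − f(θ))/(J(θ') − J(θ)). -/
def HasFAlphaDerivAt {n : ℕ} (F : Set (EuclideanSpace ℝ (Fin n)))
    (J : EuclideanSpace ℝ (Fin n) → ℝ) (f : EuclideanSpace ℝ (Fin n) → ℝ)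
    (θ : EuclideanSpace ℝ (Fin n)) (l : ℝ) : Prop :=
  IsFLimit F (fun θ' => (f θ' - f θ) / (J θ' - J θ)) θ l

/-- Upper F^α-sum U^α[f,F,P] of `f` over the subdivision `P`. -/
noncomputable def upperFSum {n : ℕ} (α : ℝ) (w : ℝ → EuclideanSpace ℝ (Fin n))
    (a₀ : ℝ) (f : EuclideanSpace ℝ (Fin n) → ℝ) {a b : ℝ} (P : Subdivision a b) : ℝ :=
  ∑ i ∈ Finset.range P.k,
    sSup (f '' (w '' Icc (P.t i) (P.t (i + 1)))) *
      (SF α w a₀ (P.t (i + 1)) - SF α w a₀ (P.t i))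

/-- Lower F^α-sum L^α[f,F,P] of `f` over the subdivision `P`. -/
noncomputable def lowerFSum {n : ℕ} (α : ℝ) (w : ℝ → EuclideanSpace ℝ (Fin n))
    (a₀ : ℝ) (f : EuclideanSpace ℝ (Fin n) → ℝ) {a b : ℝ} (P : Subdivision a b) : ℝ :=
  ∑ i ∈ Finset.range P.k,
    sInf (f '' (w '' Icc (P.t i) (P.t (i + 1)))) *
      (SF α w a₀ (P.t (i + 1)) - SF α w a₀ (P.t i))

/-- `f` is F^α-integrable on C(a,b) with integral `v`:
inf of upper sums = sup of lower sums = v. -/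
def HasFIntegral {n : ℕ} (α : ℝ) (w : ℝ → EuclideanSpace ℝ (Fin n)) (a₀ : ℝ)
    (f : EuclideanSpace ℝ (Fin n) → ℝ) (a b : ℝ) (v : ℝ) : Prop :=
  sInf (Set.range fun P : Subdivision a b => upperFSum α w a₀ f P) = v ∧
  sSup (Set.range fun P : Subdivision a b => lowerFSum α w a₀ f P) = v

/-- Upper Darboux sum of g : ℝ → ℝ over a subdivision of [c,d]. -/
noncomputable def upperDarboux (g : ℝ → ℝ) {c d : ℝ} (P : Subdivision c d) : ℝ :=
  ∑ i ∈ Finset.range P.k,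
    sSup (g '' Icc (P.t i) (P.t (i + 1))) * (P.t (i + 1) - P.t i)

/-- Lower Darboux sum of g : ℝ → ℝ over a subdivision of [c,d]. -/
noncomputable def lowerDarboux (g : ℝ → ℝ) {c d : ℝ} (P : Subdivision c d) : ℝ :=
  ∑ i ∈ Finset.range P.k,
    sInf (g '' Icc (P.t i) (P.t (i + 1))) * (P.t (i + 1) - P.t i)

/-- g is Riemann integrable on [c,d] with integral v: the infimum of the upper
Darboux sums and the supremum of the lower Darboux sums both equal v. -/
def HasRiemannIntegral (g : ℝ → ℝ) (c d v : ℝ) : Prop :=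
  sInf (Set.range fun P : Subdivision c d => upperDarboux g P) = v ∧
  sSup (Set.range fun P : Subdivision c d => lowerDarboux g P) = v

section Correspondence

variable {n : ℕ} {α : ℝ} {w : ℝ → EuclideanSpace ℝ (Fin n)} {a₀ b₀ : ℝ}

theorem SF_image (hcont : ContinuousOn (SF α w a₀) (Icc a₀ b₀))
    (hS : StrictMonoOn (SF α w a₀) (Icc a₀ b₀)) {s s' : ℝ}
    (hs : s ∈ Icc a₀ b₀) (hs' : s' ∈ Icc a₀ b₀) (hss' : s ≤ s') :
    SF α w a₀ '' Icc s s' = Icc (SF α w a₀ s) (SF α w a₀ s') := by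
  apply Subset.antisymm
  · rintro _ ⟨t, ht, rfl⟩
    have htm : t ∈ Icc a₀ b₀ := ⟨hs.1.trans ht.1, ht.2.trans hs'.2⟩
    exact ⟨hS.monotoneOn hs htm ht.1, hS.monotoneOn htm hs' ht.2⟩
  · exact intermediate_value_Icc hss' (hcont.mono (Icc_subset_Icc hs.1 hs'.2))

theorem cell_eq (hcont : ContinuousOn (SF α w a₀) (Icc a₀ b₀))
    (hS : StrictMonoOn (SF α w a₀) (Icc a₀ b₀))
    {f : EuclideanSpace ℝ (Fin n) → ℝ} {g : ℝ → ℝ}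
    (hg : ∀ t ∈ Icc a₀ b₀, g (SF α w a₀ t) = f (w t)) {s s' : ℝ}
    (hs : s ∈ Icc a₀ b₀) (hs' : s' ∈ Icc a₀ b₀) (hss' : s ≤ s') :
    g '' Icc (SF α w a₀ s) (SF α w a₀ s') = f '' (w '' Icc s s') := by
  rw [← SF_image hcont hS hs hs' hss', ← Set.image_comp, ← Set.image_comp]
  refine Set.image_congr fun t ht => ?_
  exact hg t ⟨hs.1.trans ht.1, ht.2.trans hs'.2⟩

variable {a b : ℝ}

theorem exists_push (hcont : ContinuousOn (SF α w a₀) (Icc a₀ b₀))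
    (hS : StrictMonoOn (SF α w a₀) (Icc a₀ b₀))
    (ha : a₀ ≤ a) (hab : a ≤ b) (hb : b ≤ b₀)
    (f : EuclideanSpace ℝ (Fin n) → ℝ) (g : ℝ → ℝ)
    (hg : ∀ t ∈ Icc a₀ b₀, g (SF α w a₀ t) = f (w t)) (P : Subdivision a b) :
    ∃ Q : Subdivision (SF α w a₀ a) (SF α w a₀ b),
      upperDarboux g Q = upperFSum α w a₀ f P ∧
      lowerDarboux g Q = lowerFSum α w a₀ f P := by
  have hmem : ∀ i, i ≤ P.k → P.t i ∈ Icc a₀ b₀ := fun i hi =>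
    Icc_subset_Icc ha hb (P.mem_Icc hi)
  have hfirst : SF α w a₀ (P.t (min 0 P.k)) = SF α w a₀ a := by
    rw [min_eq_left (Nat.zero_le _), P.first]
  have hlast : SF α w a₀ (P.t (min P.k P.k)) = SF α w a₀ b := by
    rw [min_self, P.last]
  have hmono : ∀ i < P.k, SF α w a₀ (P.t (min i P.k)) < SF α w a₀ (P.t (min (i + 1) P.k)) := by
    intro i hi
    rw [min_eq_left hi.le, min_eq_left hi]
    exact hS (hmem i hi.le) (hmem (i + 1) hi) (P.mono i hi)
  refine ⟨⟨P.k, fun i => SF α w a₀ (P.t (min i P.k)), hfirst, hlast, hmono⟩, ?_, ?_⟩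
  · unfold upperDarboux upperFSum
    refine Finset.sum_congr rfl fun i hi => ?_
    rw [Finset.mem_range] at hi
    show sSup (g '' Icc (SF α w a₀ (P.t (min i P.k))) (SF α w a₀ (P.t (min (i+1) P.k))))
        * (SF α w a₀ (P.t (min (i+1) P.k)) - SF α w a₀ (P.t (min i P.k))) = _
    rw [min_eq_left hi.le, min_eq_left hi,
      cell_eq hcont hS hg (hmem i hi.le) (hmem (i+1) hi) (P.mono i hi).le]
  · unfold lowerDarboux lowerFSum
    refine Finset.sum_congr rfl fun i hi => ?_
    rw [Finset.mem_range] at hi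
    show sInf (g '' Icc (SF α w a₀ (P.t (min i P.k))) (SF α w a₀ (P.t (min (i+1) P.k))))
        * (SF α w a₀ (P.t (min (i+1) P.k)) - SF α w a₀ (P.t (min i P.k))) = _
    rw [min_eq_left hi.le, min_eq_left hi,
      cell_eq hcont hS hg (hmem i hi.le) (hmem (i+1) hi) (P.mono i hi).le]

theorem exists_pull (hcont : ContinuousOn (SF α w a₀) (Icc a₀ b₀))
    (hS : StrictMonoOn (SF α w a₀) (Icc a₀ b₀))
    (ha : a₀ ≤ a) (hab : a ≤ b) (hb : b ≤ b₀)
    (f : EuclideanSpace ℝ (Fin n) → ℝ) (g : ℝ → ℝ)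
    (hg : ∀ t ∈ Icc a₀ b₀, g (SF α w a₀ t) = f (w t))
    (Q : Subdivision (SF α w a₀ a) (SF α w a₀ b)) :
    ∃ P : Subdivision a b,
      upperFSum α w a₀ f P = upperDarboux g Q ∧
      lowerFSum α w a₀ f P = lowerDarboux g Q := by
  have hamem : a ∈ Icc a₀ b₀ := ⟨ha, hab.trans hb⟩
  have hbmem : b ∈ Icc a₀ b₀ := ⟨ha.trans hab, hb⟩
  have hsurj : ∀ c : ℝ, ∃ t, c ∈ Icc (SF α w a₀ a) (SF α w a₀ b) →
      t ∈ Icc a b ∧ SF α w a₀ t = c := by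
    intro c
    by_cases hc : c ∈ Icc (SF α w a₀ a) (SF α w a₀ b)
    · obtain ⟨t, ht, hteq⟩ := intermediate_value_Icc hab
        (hcont.mono (Icc_subset_Icc ha hb)) hc
      exact ⟨t, fun _ => ⟨ht, hteq⟩⟩
    · exact ⟨a, fun h => absurd h hc⟩
  choose T hT using hsurj
  have hTmem : ∀ i, i ≤ Q.k → T (Q.t i) ∈ Icc a b := fun i hi => (hT _ (Q.mem_Icc hi)).1
  have hTeq : ∀ i, i ≤ Q.k → SF α w a₀ (T (Q.t i)) = Q.t i := fun i hi =>
    (hT _ (Q.mem_Icc hi)).2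
  have hTmem' : ∀ i, i ≤ Q.k → T (Q.t i) ∈ Icc a₀ b₀ := fun i hi =>
    Icc_subset_Icc ha hb (hTmem i hi)
  have hfirst : T (Q.t (min 0 Q.k)) = a := by
    rw [min_eq_left (Nat.zero_le _)]
    refine hS.injOn (hTmem' 0 (Nat.zero_le _)) hamem ?_
    rw [hTeq 0 (Nat.zero_le _), Q.first]
  have hlast : T (Q.t (min Q.k Q.k)) = b := by
    rw [min_self]
    refine hS.injOn (hTmem' Q.k le_rfl) hbmem ?_
    rw [hTeq Q.k le_rfl, Q.last]
  have hmono : ∀ i < Q.k, T (Q.t (min i Q.k)) < T (Q.t (min (i + 1) Q.k)) := by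
    intro i hi
    rw [min_eq_left hi.le, min_eq_left hi]
    refine (hS.lt_iff_lt (hTmem' i hi.le) (hTmem' (i+1) hi)).mp ?_
    rw [hTeq i hi.le, hTeq (i+1) hi]
    exact Q.mono i hi
  refine ⟨⟨Q.k, fun i => T (Q.t (min i Q.k)), hfirst, hlast, hmono⟩, ?_, ?_⟩
  · unfold upperDarboux upperFSum
    refine Finset.sum_congr rfl fun i hi => ?_
    rw [Finset.mem_range] at hi
    have hle : T (Q.t i) ≤ T (Q.t (i + 1)) := by
      have := hmono i hi
      rw [min_eq_left hi.le, min_eq_left hi] at this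
      exact this.le
    show sSup (f '' (w '' Icc (T (Q.t (min i Q.k))) (T (Q.t (min (i+1) Q.k)))))
        * (SF α w a₀ (T (Q.t (min (i+1) Q.k))) - SF α w a₀ (T (Q.t (min i Q.k)))) = _
    rw [min_eq_left hi.le, min_eq_left hi,
      ← cell_eq hcont hS hg (hTmem' i hi.le) (hTmem' (i+1) hi) hle,
      hTeq i hi.le, hTeq (i+1) hi]
  · unfold lowerDarboux lowerFSum
    refine Finset.sum_congr rfl fun i hi => ?_
    rw [Finset.mem_range] at hi
    have hle : T (Q.t i) ≤ T (Q.t (i + 1)) := by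
      have := hmono i hi
      rw [min_eq_left hi.le, min_eq_left hi] at this
      exact this.le
    show sInf (f '' (w '' Icc (T (Q.t (min i Q.k))) (T (Q.t (min (i+1) Q.k)))))
        * (SF α w a₀ (T (Q.t (min (i+1) Q.k))) - SF α w a₀ (T (Q.t (min i Q.k)))) = _
    rw [min_eq_left hi.le, min_eq_left hi,
      ← cell_eq hcont hS hg (hTmem' i hi.le) (hTmem' (i+1) hi) hle,
      hTeq i hi.le, hTeq (i+1) hi]

end Correspondence


/-- conjugacy of integrals: a bounded f : F → ℝ is
F^α-integrable on C(a,b) iff g = φ[f] is Riemann integrable on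
[S_F^α(a), S_F^α(b)], with equal values:
∫_{C(a,b)} f dθ = ∫_{S_F^α(a)}^{S_F^α(b)} g(u) du. -/
theorem conjugacy_of_integrals {n : ℕ} (hn : 1 ≤ n) {a₀ b₀ : ℝ}
    (w : ℝ → EuclideanSpace ℝ (Fin n))
    (hw : ContinuousOn w (Icc a₀ b₀)) (hinj : InjOn w (Icc a₀ b₀))
    {α : ℝ} (hα : α ∈ Icc (1 : ℝ) (n : ℝ))
    (hfin : ∀ t ∈ Icc a₀ b₀, massFn α w a₀ t ≠ ⊤)
    (hS : StrictMonoOn (SF α w a₀) (Icc a₀ b₀))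
    {a b : ℝ} (ha : a₀ ≤ a) (hab : a ≤ b) (hb : b ≤ b₀)
    (f : EuclideanSpace ℝ (Fin n) → ℝ)
    (hbdd : ∃ M, ∀ θ ∈ w '' Icc a₀ b₀, |f θ| ≤ M)
    (g : ℝ → ℝ) (hg : ∀ t ∈ Icc a₀ b₀, g (SF α w a₀ t) = f (w t)) :
    ∀ v : ℝ, HasFIntegral α w a₀ f a b v ↔
      HasRiemannIntegral g (SF α w a₀ a) (SF α w a₀ b) v := by
  intro v
  have hα1 : (1:ℝ) ≤ α := hα.1
  have hΓ : 0 < Real.Gamma (α + 1) := Real.Gamma_pos_of_pos (by linarith)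
  have hcont := SF_continuousOn hw hΓ hα1 hfin hS
  have hU : (Set.range fun P : Subdivision a b => upperFSum α w a₀ f P) =
      (Set.range fun Q : Subdivision (SF α w a₀ a) (SF α w a₀ b) => upperDarboux g Q) := by
    apply Subset.antisymm
    · rintro _ ⟨P, rfl⟩
      obtain ⟨Q, hQ1, _⟩ := exists_push hcont hS ha hab hb f g hg P
      exact ⟨Q, hQ1⟩
    · rintro _ ⟨Q, rfl⟩
      obtain ⟨P, hP1, _⟩ := exists_pull hcont hS ha hab hb f g hg Q
      exact ⟨P, hP1⟩
  have hL : (Set.range fun P : Subdivision a b => lowerFSum α w a₀ f P) =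
      (Set.range fun Q : Subdivision (SF α w a₀ a) (SF α w a₀ b) => lowerDarboux g Q) := by
    apply Subset.antisymm
    · rintro _ ⟨P, rfl⟩
      obtain ⟨Q, _, hQ2⟩ := exists_push hcont hS ha hab hb f g hg P
      exact ⟨Q, hQ2⟩
    · rintro _ ⟨Q, rfl⟩
      obtain ⟨P, _, hP2⟩ := exists_pull hcont hS ha hab hb f g hg Q
      exact ⟨P, hP2⟩
  unfold HasFIntegral HasRiemannIntegral
  rw [hU, hL]
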